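/- Let λ ∈ ℝ with 0 < |λ| < π/2, μ = e^{iλ} cos λ, a, b ∈ ℂ, c = a+b+1. For s ∈ ℝ put σ = μ(is-1), A = σ(σ+c-1), B = (σ+a)(σ+b), τ₁ = μ(s²+1)/2. Then |A|² - |B|² - 2 Re[(A-B)·conj(τ₁)] = cos λ · (L s² - 2 M s + N), where L = Re[e^{-iλ} a b (2 + e^{-2iλ})], M = Im[e^{-iλ} a b (conj(a)+conj(b) - 2 e^{-iλ} cos λ)], and N = Re[e^{-iλ} a b (2conj(a) + 2conj(b) - e^{-2iλ} - e^{iλ} conj(a) conj(b)/cos λ)]. -/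

import Mathlib

open Complex Real

set_option maxHeartbeats 1000000 in
/-- The key quadratic identity in the proof of the spirallikeness criterion
(case `c = a + b + 1`). -/
theorem spirallike_quadratic_identity (lam : ℝ) (hlam0 : 0 < |lam|) (hlam : |lam| < π/2)
    (μ : ℂ) (hμ : μ = Complex.exp ((lam:ℂ) * Complex.I) * (Real.cos lam : ℂ))
    (a b c : ℂ) (hc : c = a + b + 1) (s : ℝ)
    (σ A B τ₁ : ℂ)
    (hσ : σ = μ * (Complex.I * s - 1))
    (hA : A = σ * (σ + c - 1)) (hB : B = (σ + a) * (σ + b))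
    (hτ : τ₁ = μ * ((s : ℂ) ^ 2 + 1) / 2) :
    ‖A‖ ^ 2 - ‖B‖ ^ 2 - 2 * ((A - B) * (starRingEnd ℂ) τ₁).re =
      Real.cos lam *
        ((Complex.exp (-(lam:ℂ) * Complex.I) * a * b *
            (2 + Complex.exp (-(2*lam:ℂ) * Complex.I))).re * s ^ 2
        - 2 * (Complex.exp (-(lam:ℂ) * Complex.I) * a * b *
            ((starRingEnd ℂ) a + (starRingEnd ℂ) b -
              2 * Complex.exp (-(lam:ℂ) * Complex.I) * (Real.cos lam : ℂ))).im * s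
        + (Complex.exp (-(lam:ℂ) * Complex.I) * a * b *
            (2 * (starRingEnd ℂ) a + 2 * (starRingEnd ℂ) b -
              Complex.exp (-(2*lam:ℂ) * Complex.I) -
              Complex.exp ((lam:ℂ) * Complex.I) * (starRingEnd ℂ) a * (starRingEnd ℂ) b /
                (Real.cos lam : ℂ))).re) := by
  have hA2 : ∀ z : ℂ, ‖z‖ ^ 2 = (z * (starRingEnd ℂ) z).re := by
    intro z
    rw [Complex.mul_conj]
    simp [Complex.sq_norm]
  have hRgen : ∀ (r t : ℝ) (X Y Z : ℂ),
      r * (X.re * t ^ 2 - 2 * Y.im * t + Z.re) =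
        ((r : ℂ) * (X * (t:ℂ)^2 + 2 * Complex.I * Y * (t:ℂ) + Z)).re := by
    intro r t X Y Z
    have hpow : ((t:ℂ))^2 = ((t^2 : ℝ) : ℂ) := by push_cast; ring
    rw [hpow]
    simp only [Complex.mul_re, Complex.add_re, Complex.add_im, Complex.mul_im,
      Complex.ofReal_re, Complex.ofReal_im, Complex.I_re, Complex.I_im,
      Complex.re_ofNat, Complex.im_ofNat]
    ring
  have hLgen : ∀ (P Q T : ℂ),
      (P * (starRingEnd ℂ) P).re - (Q * (starRingEnd ℂ) Q).re -
        2 * ((P - Q) * (starRingEnd ℂ) T).re =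
      (P * (starRingEnd ℂ) P - Q * (starRingEnd ℂ) Q -
        2 * ((P - Q) * (starRingEnd ℂ) T)).re := by
    intro P Q T
    simp only [Complex.sub_re, Complex.mul_re, Complex.re_ofNat, Complex.im_ofNat]
    ring
  have hcosr : Real.cos lam ≠ 0 := by
    have h1 : -(π/2) < lam := by
      have := abs_lt.mp hlam
      linarith [this.1]
    have h2 : lam < π/2 := (abs_lt.mp hlam).2
    exact ne_of_gt (Real.cos_pos_of_mem_Ioo ⟨h1, h2⟩)
  have hcosC : ((Real.cos lam : ℝ) : ℂ) ≠ 0 := Complex.ofReal_ne_zero.mpr hcosr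
  have hcosC2 : Complex.cos (lam:ℂ) ≠ 0 := by
    rw [← Complex.ofReal_cos]
    exact hcosC
  set e : ℂ := Complex.exp ((lam:ℂ) * Complex.I) with he_def
  set f : ℂ := Complex.exp (-(lam:ℂ) * Complex.I) with hf_def
  have hef : e * f = 1 := by
    rw [he_def, hf_def, ← Complex.exp_add,
      show (lam:ℂ) * Complex.I + -(lam:ℂ) * Complex.I = 0 by ring, Complex.exp_zero]
  have hconjE : (starRingEnd ℂ) e = f := by
    rw [he_def, hf_def, ← Complex.exp_conj, map_mul, Complex.conj_I, Complex.conj_ofReal]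
    congr 1
    ring
  have hconjF : (starRingEnd ℂ) f = e := by
    rw [← hconjE, Complex.conj_conj]
  have hexp2 : Complex.exp (-(2*lam:ℂ) * Complex.I) = f * f := by
    rw [hf_def, ← Complex.exp_add]
    congr 1
    ring
  have hsum2 : e + f = 2 * ((Real.cos lam : ℝ) : ℂ) := by
    rw [Complex.ofReal_cos, Complex.cos, he_def, hf_def]
    ring
  rw [hA2, hA2, hLgen, hRgen, hexp2]
  have hRfix : ((Real.cos lam : ℝ) : ℂ) *
      (f * a * b * (2 + f * f) * (s:ℂ)^2 +
        2 * Complex.I * (f * a * b * ((starRingEnd ℂ) a + (starRingEnd ℂ) b -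
          2 * f * (Real.cos lam : ℂ))) * (s:ℂ) +
        f * a * b * (2 * (starRingEnd ℂ) a + 2 * (starRingEnd ℂ) b - f * f -
          e * (starRingEnd ℂ) a * (starRingEnd ℂ) b / (Real.cos lam : ℂ))) =
      ((Real.cos lam : ℝ) : ℂ) *
        (f * a * b * (2 + f * f) * (s:ℂ)^2 +
          2 * Complex.I * (f * a * b * ((starRingEnd ℂ) a + (starRingEnd ℂ) b -
            2 * f * (Real.cos lam : ℂ))) * (s:ℂ)) +
      ((Real.cos lam : ℝ) : ℂ) *
        (f * a * b * (2 * (starRingEnd ℂ) a + 2 * (starRingEnd ℂ) b - f * f)) -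
      f * a * b * e * (starRingEnd ℂ) a * (starRingEnd ℂ) b := by
    field_simp [hcosC2]
    ring
  rw [hRfix]
  have key : A * (starRingEnd ℂ) A - B * (starRingEnd ℂ) B -
        2 * ((A - B) * (starRingEnd ℂ) τ₁) +
      (starRingEnd ℂ) (A * (starRingEnd ℂ) A - B * (starRingEnd ℂ) B -
        2 * ((A - B) * (starRingEnd ℂ) τ₁)) =
      (((Real.cos lam : ℝ) : ℂ) *
        (f * a * b * (2 + f * f) * (s:ℂ)^2 +
          2 * Complex.I * (f * a * b * ((starRingEnd ℂ) a + (starRingEnd ℂ) b -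
            2 * f * (Real.cos lam : ℂ))) * (s:ℂ)) +
      ((Real.cos lam : ℝ) : ℂ) *
        (f * a * b * (2 * (starRingEnd ℂ) a + 2 * (starRingEnd ℂ) b - f * f)) -
      f * a * b * e * (starRingEnd ℂ) a * (starRingEnd ℂ) b) +
      (starRingEnd ℂ) (((Real.cos lam : ℝ) : ℂ) *
        (f * a * b * (2 + f * f) * (s:ℂ)^2 +
          2 * Complex.I * (f * a * b * ((starRingEnd ℂ) a + (starRingEnd ℂ) b -
            2 * f * (Real.cos lam : ℂ))) * (s:ℂ)) +
      ((Real.cos lam : ℝ) : ℂ) *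
        (f * a * b * (2 * (starRingEnd ℂ) a + 2 * (starRingEnd ℂ) b - f * f)) -
      f * a * b * e * (starRingEnd ℂ) a * (starRingEnd ℂ) b) := by
    rw [hA, hB, hτ, hσ, hμ, hc]
    simp only [map_sub, map_add, map_mul, map_div₀, map_pow, map_ofNat, map_one,
      map_neg, neg_neg, Complex.conj_conj, Complex.conj_I, Complex.conj_ofReal,
      hconjE, hconjF]
    linear_combination ((2*a*b*((starRingEnd ℂ) a)*((starRingEnd ℂ) b)) + ((-1/2)*f^2*a*b) + ((1/2)*f^2*(s:ℂ)^2*a*b) + ((-1/2)*e*f*((starRingEnd ℂ) a)*((starRingEnd ℂ) b)) + ((-1/2)*e*f*a*b) + ((1/2)*e*f*(s:ℂ)^2*((starRingEnd ℂ) a)*((starRingEnd ℂ) b)) + ((1/2)*e*f*(s:ℂ)^2*a*b) + ((-1/2)*e^2*((starRingEnd ℂ) a)*((starRingEnd ℂ) b)) + ((1/2)*e^2*(s:ℂ)^2*((starRingEnd ℂ) a)*((starRingEnd ℂ) b))) * hef + (((-2)*f^2*(Real.cos lam : ℂ)^2*(s:ℂ)^2*a*b) + ((-2)*e^2*(Real.cos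 lam : ℂ)^2*(s:ℂ)^2*((starRingEnd ℂ) a)*((starRingEnd ℂ) b))) * Complex.I_sq + (((-1/2)*f*a*b) + ((1/2)*f*(s:ℂ)^2*a*b) + (f^2*(Real.cos lam : ℂ)*a*b) + (-f^2*(Real.cos lam : ℂ)*(s:ℂ)^2*a*b) + ((-1/2)*e*((starRingEnd ℂ) a)*((starRingEnd ℂ) b)) + ((1/2)*e*(s:ℂ)^2*((starRingEnd ℂ) a)*((starRingEnd ℂ) b)) + ((1/2)*e*f^2*a*b) + ((-1/2)*e*f^2*(s:ℂ)^2*a*b) + (e^2*(Real.cos lam : ℂ)*((starRingEnd ℂ) a)*((starRingEnd ℂ) b)) + (-e^2*(Real.cos lam : ℂ)*(s:ℂ)^2*((starRingEnd ℂ) a)*((starRingEnd ℂ) b)) + ((1/2)*e^2*f*((starRingEnd ℂ) a)*((starRingEnd ℂ) b)) + ((-1/2)*e^2*f*(s:ℂ)^2*((starRingEnd ℂ) a)*((starRingEnd ℂ) b))) * hsum2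
  have h2 := congrArg Complex.re key
  simp only [Complex.add_re, Complex.conj_re] at h2
  linarith
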